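/- If (1-p_l)C'(p_l) + C(p_l) + r ≥ 0, then J(p) = λ(rp + C(p))/(1-p) is non-decreasing on [p_l, p_u], hence attains its minimum over [p_l, p_u] at p_l. -/

import Mathlib

/-- If (1-p_l)C'(p_l) + C(p_l) + r ≥ 0, then J(p) = λ(rp + C(p))/(1-p) is
non-decreasing on [p_l, p_u], hence attains its minimum over [p_l, p_u] at p_l. -/
theorem stmt_2 (lam r pl pu : ℝ) (hlam : 0 < lam) (hr : 0 < r)
    (hpl : 0 < pl) (hplu : pl < pu) (hpu : pu < 1)
    (C C' : ℝ → ℝ)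
    (hconv : ConvexOn ℝ (Set.Icc pl pu) C)
    (hderiv : ∀ q ∈ Set.Icc pl pu, HasDerivAt C (C' q) q)
    (hcont : ContinuousOn C' (Set.Icc pl pu))
    (hcond : 0 ≤ (1 - pl) * C' pl + C pl + r) :
    MonotoneOn (fun q => lam * (r * q + C q) / (1 - q)) (Set.Icc pl pu) ∧
    ∀ q ∈ Set.Icc pl pu,
      lam * (r * pl + C pl) / (1 - pl) ≤ lam * (r * q + C q) / (1 - q) := by
  have hplmem : pl ∈ Set.Icc pl pu := ⟨le_refl pl, hplu.le⟩
  -- the key nonnegativity: for all q in Icc, (1-q) C' q + C q + r ≥ 0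
  have hg : ∀ q ∈ Set.Icc pl pu, 0 ≤ (1 - q) * C' q + C q + r := by
    intro q hq
    rcases eq_or_lt_of_le hq.1 with rfl | hlt
    · exact hcond
    · have hs1 : C' pl ≤ slope C pl q :=
        hconv.le_slope_of_hasDerivAt hplmem hq hlt (hderiv pl hplmem)
      have hs2 : slope C pl q ≤ C' q :=
        hconv.slope_le_of_hasDerivAt hplmem hq hlt (hderiv q hq)
      have hslope : slope C pl q * (q - pl) = C q - C pl := by
        rw [slope_def_field]
        exact div_mul_cancel₀ _ (sub_ne_zero.mpr hlt.ne')
      have h1q : 0 < 1 - q := by linarith [hq.2]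
      nlinarith [hs1, hs2, hslope, hcond, sub_pos.mpr hlt]
  -- continuity of J on Icc
  have hCcont : ContinuousOn C (Set.Icc pl pu) := fun q hq =>
    (hderiv q hq).continuousAt.continuousWithinAt
  have hne : ∀ q ∈ Set.Icc pl pu, (1 : ℝ) - q ≠ 0 := fun q hq => by
    have : q < 1 := lt_of_le_of_lt hq.2 hpu
    linarith
  have hJcont : ContinuousOn (fun q => lam * (r * q + C q) / (1 - q)) (Set.Icc pl pu) := by
    apply ContinuousOn.div
    · exact (continuousOn_const.mul ((continuousOn_const.mul continuousOn_id).add hCcont))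
    · exact continuousOn_const.sub continuousOn_id
    · exact hne
  -- derivative of J at interior points
  have hint : interior (Set.Icc pl pu) = Set.Ioo pl pu := interior_Icc
  have hJderiv : ∀ q ∈ Set.Ioo pl pu,
      HasDerivAt (fun q => lam * (r * q + C q) / (1 - q))
        (lam * ((1 - q) * C' q + C q + r) / (1 - q) ^ 2) q := by
    intro q hq
    have hqI : q ∈ Set.Icc pl pu := Set.Ioo_subset_Icc_self hq
    have hnum : HasDerivAt (fun q => lam * (r * q + C q)) (lam * (r + C' q)) q := by
      have h : HasDerivAt (fun q => r * q + C q) (r * 1 + C' q) q :=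
        ((hasDerivAt_id q).const_mul r).add (hderiv q hqI)
      simpa using h.const_mul lam
    have hden : HasDerivAt (fun q : ℝ => 1 - q) (-1) q := by
      simpa using (hasDerivAt_id q).const_sub (1:ℝ)
    have hd : HasDerivAt (fun q => lam * (r * q + C q) / (1 - q)) _ q := hnum.div hden (hne q hqI)
    convert hd using 1
    field_simp
    ring
  have hmono : MonotoneOn (fun q => lam * (r * q + C q) / (1 - q)) (Set.Icc pl pu) := by
    apply monotoneOn_of_hasDerivWithinAt_nonneg (convex_Icc pl pu) hJcont
    · intro q hq
      rw [hint] at hq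
      exact (hJderiv q hq).hasDerivWithinAt
    · intro q hq
      rw [hint] at hq
      have hqI : q ∈ Set.Icc pl pu := Set.Ioo_subset_Icc_self hq
      have h1 : 0 < (1 - q) ^ 2 := by
        have := hne q hqI
        positivity
      have h2 : 0 ≤ lam * ((1 - q) * C' q + C q + r) :=
        mul_nonneg hlam.le (hg q hqI)
      exact div_nonneg h2 h1.le
  exact ⟨hmono, fun q hq => hmono hplmem hq hq.1⟩
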